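/- Let q ∈ ℂ with q² ≠ 1, let ε ∈ ℂ be nonzero, and let A be the 4×4 complex matrix consisting of two 2×2 Jordan blocks A = ε(e₁₁ + e₂₂) + e₁₂ + (e₃₃ + e₄₄) + e₃₄. Then B(A)² = 0; that is, for all 4×4 complex matrices B and B' with AB = qBA and AB' = qB'A, one has BB' = 0. -/

import Mathlib

/-- The 4×4 matrix unit `e_{ij}` (indices `0,…,3`). -/
def e (i j : Fin 4) : Matrix (Fin 4) (Fin 4) ℂ := Matrix.single i j 1

private lemma qcomm_facts (q ε : ℂ) (hq1 : (1:ℂ) - q ≠ 0) (hε : ε ≠ 0)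
    (C : Matrix (Fin 4) (Fin 4) ℂ)
    (hC : !![ε,1,0,0;0,ε,0,0;0,0,1,1;0,0,0,1] * C =
      q • (C * !![ε,1,0,0;0,ε,0,0;0,0,1,1;0,0,0,1])) :
    C 0 0 = 0 ∧ C 0 1 = 0 ∧ C 1 0 = 0 ∧ C 1 1 = 0 ∧ C 1 2 = 0 ∧ C 2 2 = 0 ∧
    C 2 3 = 0 ∧ C 3 0 = 0 ∧ C 3 2 = 0 ∧ C 3 3 = 0 ∧
    (ε - q) * C 0 2 = 0 ∧ (ε - q) * C 1 3 = 0 ∧ (ε - q) * C 0 3 = q * C 0 2 - C 1 3 ∧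
    (1 - q*ε) * C 2 0 = 0 ∧ (1 - q*ε) * C 3 1 = 0 ∧
    (1 - q*ε) * C 2 1 = q * C 2 0 - C 3 1 := by
  have h := fun i j => congrFun (congrFun hC i) j
  have h00 := h 0 0; have h01 := h 0 1; have h02 := h 0 2; have h03 := h 0 3
  have h10 := h 1 0; have h11 := h 1 1; have h12 := h 1 2; have h13 := h 1 3
  have h20 := h 2 0; have h21 := h 2 1; have h22 := h 2 2; have h23 := h 2 3
  have h30 := h 3 0; have h31 := h 3 1; have h32 := h 3 2; have h33 := h 3 3
  simp [Matrix.mul_apply, Fin.sum_univ_four, Matrix.vecHead, Matrix.vecTail] at h00 h01 h02 h03 h10 h11 h12 h13 h20 h21 h22 h23 h30 h31 h32 h33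
  have hεq : ε * (1 - q) ≠ 0 := mul_ne_zero hε hq1
  have c10 : C 1 0 = 0 := by
    have h' : ε * (1 - q) * C 1 0 = 0 := by linear_combination h10
    exact (mul_eq_zero.1 h').resolve_left hεq
  have c00 : C 0 0 = 0 := by
    have h' : ε * (1 - q) * C 0 0 = 0 := by linear_combination h00 - c10
    exact (mul_eq_zero.1 h').resolve_left hεq
  have c11 : C 1 1 = 0 := by
    have h' : ε * (1 - q) * C 1 1 = 0 := by linear_combination h11 + q * c10
    exact (mul_eq_zero.1 h').resolve_left hεq
  have c01 : C 0 1 = 0 := by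
    have h' : ε * (1 - q) * C 0 1 = 0 := by linear_combination h01 - c11 + q * c00
    exact (mul_eq_zero.1 h').resolve_left hεq
  have c32 : C 3 2 = 0 := by
    have h' : (1 - q) * C 3 2 = 0 := by linear_combination h32
    exact (mul_eq_zero.1 h').resolve_left hq1
  have c33 : C 3 3 = 0 := by
    have h' : (1 - q) * C 3 3 = 0 := by linear_combination h33 + q * c32
    exact (mul_eq_zero.1 h').resolve_left hq1
  have c22 : C 2 2 = 0 := by
    have h' : (1 - q) * C 2 2 = 0 := by linear_combination h22 - c32
    exact (mul_eq_zero.1 h').resolve_left hq1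
  have c23 : C 2 3 = 0 := by
    have h' : (1 - q) * C 2 3 = 0 := by linear_combination h23 - c33 + q * c22
    exact (mul_eq_zero.1 h').resolve_left hq1
  have f30 : (1 - q*ε) * C 3 0 = 0 := by linear_combination h30
  have c30 : C 3 0 = 0 := by
    by_cases h1 : (1:ℂ) - q * ε = 0
    · linear_combination h20 - C 2 0 * h1
    · exact (mul_eq_zero.1 f30).resolve_left h1
  have f20 : (1 - q*ε) * C 2 0 = 0 := by linear_combination h20 - c30
  have f31 : (1 - q*ε) * C 3 1 = 0 := by linear_combination h31 + q * c30
  have f21 : (1 - q*ε) * C 2 1 = q * C 2 0 - C 3 1 := by linear_combination h21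
  have f12 : (ε - q) * C 1 2 = 0 := by
    rcases h12 with h' | h'
    · rw [h']; ring
    · rw [h']; ring
  have c12 : C 1 2 = 0 := by
    by_cases h2 : ε - q = 0
    · linear_combination h02 - C 0 2 * h2
    · exact (mul_eq_zero.1 f12).resolve_left h2
  have f02 : (ε - q) * C 0 2 = 0 := by linear_combination h02 - c12
  have f13 : (ε - q) * C 1 3 = 0 := by linear_combination h13 + q * c12
  have f03 : (ε - q) * C 0 3 = q * C 0 2 - C 1 3 := by linear_combination h03
  exact ⟨c00, c01, c10, c11, c12, c22, c23, c30, c32, c33, f02, f13, f03, f20, f31, f21⟩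

/-- for the 4×4 matrix `A = ε(e₁₁+e₂₂) + e₁₂ + (e₃₃+e₄₄) + e₃₄`
consisting of two 2×2 Jordan blocks (`ε ≠ 0`, `q² ≠ 1`), one has `B(A)² = 0`:
any two matrices `q`-commuting with `A` have zero product. -/
theorem two_jordan_blocks_qcommutant_square_zero (q ε : ℂ) (hq : q ^ 2 ≠ 1) (hε : ε ≠ 0)
    (B B' : Matrix (Fin 4) (Fin 4) ℂ)
    (hB : (ε • (e 0 0 + e 1 1) + e 0 1 + (e 2 2 + e 3 3) + e 2 3) * B =
      q • (B * (ε • (e 0 0 + e 1 1) + e 0 1 + (e 2 2 + e 3 3) + e 2 3)))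
    (hB' : (ε • (e 0 0 + e 1 1) + e 0 1 + (e 2 2 + e 3 3) + e 2 3) * B' =
      q • (B' * (ε • (e 0 0 + e 1 1) + e 0 1 + (e 2 2 + e 3 3) + e 2 3))) :
    B * B' = 0 := by
  have hq1 : (1:ℂ) - q ≠ 0 := by
    intro h
    exact hq (by linear_combination -(q + 1) * h)
  have hA : (ε • (e 0 0 + e 1 1) + e 0 1 + (e 2 2 + e 3 3) + e 2 3)
      = !![ε,1,0,0;0,ε,0,0;0,0,1,1;0,0,0,1] := by
    ext i j
    fin_cases i <;> fin_cases j <;>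
      simp [e, Matrix.single, Matrix.vecHead, Matrix.vecTail]
  rw [hA] at hB hB'
  obtain ⟨c00, c01, c10, c11, c12, c22, c23, c30, c32, c33, f02, f13, f03, f20, f31, f21⟩ :=
    qcomm_facts q ε hq1 hε B hB
  obtain ⟨d00, d01, d10, d11, d12, d22, d23, d30, d32, d33, g02, g13, g03, g20, g31, g21⟩ :=
    qcomm_facts q ε hq1 hε B' hB'
  rcases eq_or_ne ε q with heq | hne
  · -- ε = q : the (2,1)-block entries vanish since 1 - q*ε = 1 - q² ≠ 0
    have h1 : (1:ℂ) - q * ε ≠ 0 := by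
      intro h
      exact hq (by linear_combination -h - q * heq)
    have c20 : B 2 0 = 0 := (mul_eq_zero.1 f20).resolve_left h1
    have c31 : B 3 1 = 0 := (mul_eq_zero.1 f31).resolve_left h1
    have c21 : B 2 1 = 0 := by
      have : (1 - q*ε) * B 2 1 = 0 := by rw [f21, c20, c31]; ring
      exact (mul_eq_zero.1 this).resolve_left h1
    have d20 : B' 2 0 = 0 := (mul_eq_zero.1 g20).resolve_left h1
    have d31 : B' 3 1 = 0 := (mul_eq_zero.1 g31).resolve_left h1
    have d21 : B' 2 1 = 0 := by
      have : (1 - q*ε) * B' 2 1 = 0 := by rw [g21, d20, d31]; ring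
      exact (mul_eq_zero.1 this).resolve_left h1
    have hBcol : ∀ i : Fin 4, B i 0 = 0 ∧ B i 1 = 0 := by
      intro i; fin_cases i
      exacts [⟨c00, c01⟩, ⟨c10, c11⟩, ⟨c20, c21⟩, ⟨c30, c31⟩]
    have hBrow : ∀ j : Fin 4, B' 2 j = 0 ∧ B' 3 j = 0 := by
      intro j; fin_cases j
      exacts [⟨d20, d30⟩, ⟨d21, d31⟩, ⟨d22, d32⟩, ⟨d23, d33⟩]
    ext i j
    rw [Matrix.mul_apply, Fin.sum_univ_four, (hBcol i).1, (hBcol i).2,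
      (hBrow j).1, (hBrow j).2]
    simp
  · -- ε ≠ q : the (1,2)-block entries vanish
    have h2 : ε - q ≠ 0 := sub_ne_zero.2 hne
    have c02 : B 0 2 = 0 := (mul_eq_zero.1 f02).resolve_left h2
    have c13 : B 1 3 = 0 := (mul_eq_zero.1 f13).resolve_left h2
    have c03 : B 0 3 = 0 := by
      have : (ε - q) * B 0 3 = 0 := by rw [f03, c02, c13]; ring
      exact (mul_eq_zero.1 this).resolve_left h2
    have d02 : B' 0 2 = 0 := (mul_eq_zero.1 g02).resolve_left h2
    have d13 : B' 1 3 = 0 := (mul_eq_zero.1 g13).resolve_left h2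
    have d03 : B' 0 3 = 0 := by
      have : (ε - q) * B' 0 3 = 0 := by rw [g03, d02, d13]; ring
      exact (mul_eq_zero.1 this).resolve_left h2
    have hBcol : ∀ i : Fin 4, B i 2 = 0 ∧ B i 3 = 0 := by
      intro i; fin_cases i
      exacts [⟨c02, c03⟩, ⟨c12, c13⟩, ⟨c22, c23⟩, ⟨c32, c33⟩]
    have hBrow : ∀ j : Fin 4, B' 0 j = 0 ∧ B' 1 j = 0 := by
      intro j; fin_cases j
      exacts [⟨d00, d10⟩, ⟨d01, d11⟩, ⟨d02, d12⟩, ⟨d03, d13⟩]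
    ext i j
    rw [Matrix.mul_apply, Fin.sum_univ_four, (hBcol i).1, (hBcol i).2,
      (hBrow j).1, (hBrow j).2]
    simp
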